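/- Let c, d, q, t be positive integers and let ζ = ζ(c,d,q,t) = 2dμ where μ = μ(c,q,t) is a constant for which the slash lemma holds. Let G be a graph, let W be a d-loose polypath in G, let x, y ∈ V(W) be distinct and non-adjacent, and let P be a collection of ζ pairwise internally disjoint induced paths in G from x to y with V(P) ⊆ V(W). Then there exist a subfamily P_0 ⊆ P with |P_0| = μ and an induced path W_0 in G − {x, y} such that W_0 is an x-slash for P_0, i.e., for every path P in P_0 the unique neighbor of x on P lies on W_0. -/

import Mathlib

open scoped Classical

section aux
variable {V : Type} {G : SimpleGraph V}

lemma getElem_idx_congr {l : List V} {i j : ℕ} (hij : i = j) (hi : i < l.length) :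
    l[i]'hi = l[j]'(hij ▸ hi) := by subst hij; rfl

lemma slice_length {r : List V} {a k : ℕ} (h : a + k ≤ r.length) :
    ((r.drop a).take k).length = k := by
  simp [List.length_take, List.length_drop]; omega

lemma slice_sublist (r : List V) (a k : ℕ) : ((r.drop a).take k).Sublist r :=
  (List.take_sublist _ _).trans (List.drop_sublist _ _)

lemma slice_getElem {r : List V} {a k i : ℕ} (h : a + k ≤ r.length) (hi : i < k) :
    ((r.drop a).take k)[i]'(by rw [slice_length h]; exact hi) = r[a + i]'(by omega) := by
  simp [List.getElem_take, List.getElem_drop]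

lemma mem_slice {r : List V} {a k j : ℕ} (h : a + k ≤ r.length) (h1 : a ≤ j) (h2 : j < a + k) :
    r[j]'(by omega) ∈ (r.drop a).take k := by
  refine List.mem_iff_getElem.mpr ⟨j - a, by rw [slice_length h]; omega, ?_⟩
  exact (slice_getElem h (by omega : j - a < k)).trans (getElem_idx_congr (by omega) _)

end aux

/-- `l` is the vertex sequence of an induced path in `G`. -/
def IsPathList {V : Type} (G : SimpleGraph V) (l : List V) : Prop :=
  l ≠ [] ∧ l.Nodup ∧ ∀ i j : Fin l.length,
    (G.Adj (l.get i) (l.get j) ↔ (i.1 + 1 = j.1 ∨ j.1 + 1 = i.1))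

/-- `p` is an induced path in `G` from `x` to `y`. -/
def IsXYPath {V : Type} (G : SimpleGraph V) (x y : V) (p : List V) : Prop :=
  IsPathList G p ∧ p.head? = some x ∧ p.getLast? = some y

/-- `P` is a `w`-polypath in `G`. -/
def IsPolypath {V : Type} (G : SimpleGraph V) (w : ℕ) (P : Finset (List V)) : Prop :=
  P.card = w ∧ (∀ p ∈ P, IsPathList G p) ∧
  ∀ p ∈ P, ∀ q ∈ P, p ≠ q → ∀ v ∈ p, v ∉ q

/-- The polypath `P` is `d`-loose. -/
def DLoose {V : Type} (G : SimpleGraph V) (d : ℕ) (P : Finset (List V)) : Prop :=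
  ∀ p ∈ P, ∀ v ∈ p,
    ((P.erase p).filter (fun q => ∃ u ∈ q, G.Adj v u)).card < d

/-- `w` is an `x`-slash for the collection `P` of paths from `x` to `y`. -/
def XSlash {V : Type} (G : SimpleGraph V) (x y : V)
    (P : Finset (List V)) (w : List V) : Prop :=
  IsPathList G w ∧ x ∉ w ∧ y ∉ w ∧
  ∀ p ∈ P, ∀ v ∈ p, G.Adj x v → v ∈ w

lemma slice_isPathList {V : Type} {G : SimpleGraph V} {r : List V} (hr : IsPathList G r)
    {a k : ℕ} (hk : 0 < k) (h : a + k ≤ r.length) :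
    IsPathList G ((r.drop a).take k) := by
  refine ⟨?_, hr.2.1.sublist (slice_sublist r a k), ?_⟩
  · intro he
    have hl := slice_length h
    rw [he] at hl
    simp at hl
    omega
  · intro i j
    have hsl := slice_length (r := r) h
    have hi : i.1 < k := by have := i.2; omega
    have hj : j.1 < k := by have := j.2; omega
    have hij := hr.2.2 ⟨a + i.1, by omega⟩ ⟨a + j.1, by omega⟩
    simp only [List.get_eq_getElem] at hij ⊢
    rw [slice_getElem h hi, slice_getElem h hj]
    exact hij.trans (by omega)

theorem stmt18 (c d q t μ : ℕ) (hc : 0 < c) (hd : 0 < d) (hq : 0 < q)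
    (ht : 0 < t) (hμ : 0 < μ)
    (V : Type) (G : SimpleGraph V) (W : Finset (List V)) (w : ℕ)
    (hpoly : IsPolypath G w W) (hloose : DLoose G d W)
    (x y : V) (hx : ∃ p ∈ W, x ∈ p) (hy : ∃ p ∈ W, y ∈ p)
    (hxy : x ≠ y) (hnadj : ¬ G.Adj x y)
    (P : Finset (List V)) (hcard : P.card = 2 * d * μ)
    (hP : ∀ p ∈ P, IsXYPath G x y p ∧ ∀ v ∈ p, ∃ r ∈ W, v ∈ r)
    (hdisj : ∀ p ∈ P, ∀ p' ∈ P, p ≠ p' → ∀ v ∈ p, v ∈ p' → v = x ∨ v = y) :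
    ∃ P0 ⊆ P, P0.card = μ ∧ ∃ W0 : List V, XSlash G x y P0 W0 := by
  classical
  obtain ⟨hWcard, hWpath, hWdisj⟩ := hpoly
  obtain ⟨wx, hwxW, hxwx⟩ := hx
  set sv : List V → V := fun p => p.getD 1 x with hsv_def
  -- length > 1
  have hlen : ∀ p ∈ P, 1 < p.length := by
    intro p hp
    obtain ⟨⟨hpl, hhead, hlast⟩, -⟩ := hP p hp
    rcases p with _ | ⟨aa, l⟩
    · exact absurd rfl hpl.1
    rcases l with _ | ⟨bb, l⟩
    · simp [List.head?] at hhead hlast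
      exact absurd (hhead.symm.trans hlast) hxy
    · simp
  have hgetx : ∀ p ∈ P, ∀ h0 : 0 < p.length, p[0] = x := by
    intro p hp h0
    obtain ⟨⟨⟨hne, -, -⟩, hhead, -⟩, -⟩ := hP p hp
    rw [List.getElem_zero h0]
    rw [List.head?_eq_head hne] at hhead
    exact Option.some_injective _ hhead
  have hsveq : ∀ p : List V, ∀ h : 1 < p.length, sv p = p[1] := by
    intro p h
    exact List.getD_eq_getElem _ _ h
  have hsv_mem : ∀ p ∈ P, sv p ∈ p := by
    intro p hp
    rw [hsveq p (hlen p hp)]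
    exact List.getElem_mem _
  have hadjsv : ∀ p ∈ P, G.Adj x (sv p) := by
    intro p hp
    have hl := hlen p hp
    have hpath := (hP p hp).1.1
    have h := (hpath.2.2 ⟨0, by omega⟩ ⟨1, hl⟩).mpr (Or.inl rfl)
    simp only [List.get_eq_getElem] at h
    rwa [hgetx p hp (by omega), ← hsveq p hl] at h
  have huniq : ∀ p ∈ P, ∀ v ∈ p, G.Adj x v → v = sv p := by
    intro p hp v hv hadj
    have hl := hlen p hp
    have hpath := (hP p hp).1.1
    obtain ⟨j, hj, hgj⟩ := List.mem_iff_getElem.mp hv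
    have h01 := hpath.2.2 ⟨0, by omega⟩ ⟨j, hj⟩
    simp only [List.get_eq_getElem] at h01
    rw [hgetx p hp (by omega), hgj] at h01
    have hj1 : j = 1 := by have := h01.mp hadj; omega
    rw [← hgj, hsveq p hl]
    exact getElem_idx_congr hj1 hj
  have hsvnx : ∀ p ∈ P, sv p ≠ x := by
    intro p hp h
    exact G.irrefl (h ▸ hadjsv p hp)
  have hsvny : ∀ p ∈ P, sv p ≠ y := by
    intro p hp h
    exact hnadj (h ▸ hadjsv p hp)
  have hinj : ∀ p ∈ P, ∀ p' ∈ P, sv p = sv p' → p = p' := by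
    intro p hp p' hp' he
    by_contra hne
    rcases hdisj p hp p' hp' hne (sv p) (hsv_mem p hp) (he ▸ hsv_mem p' hp') with h | h
    · exact hsvnx p hp h
    · exact hsvny p hp h
  -- choose container path for each sv p
  have hex' : ∀ p : List V, ∃ r, p ∈ P → (r ∈ W ∧ sv p ∈ r) := by
    intro p
    by_cases hp : p ∈ P
    · obtain ⟨r, hr1, hr2⟩ := (hP p hp).2 (sv p) (hsv_mem p hp)
      exact ⟨r, fun _ => ⟨hr1, hr2⟩⟩
    · exact ⟨[], fun h => absurd h hp⟩
  choose f hf using hex'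
  -- case split on μ
  rcases Nat.lt_or_ge μ 2 with hμ1 | hμ2
  · -- μ = 1 : use a singleton path
    have hμe : μ = 1 := by omega
    subst hμe
    have hPne : P.Nonempty := by
      rw [← Finset.card_pos, hcard]; omega
    obtain ⟨p, hp⟩ := hPne
    refine ⟨{p}, Finset.singleton_subset_iff.mpr hp, Finset.card_singleton p, [sv p],
      ⟨by simp, by simp, ?_⟩, ?_, ?_, ?_⟩
    · intro i j
      simp only [List.get_eq_getElem, List.getElem_singleton]
      constructor
      · exact fun h => absurd h (G.irrefl)
      · intro h
        have hi := i.2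
        have hj := j.2
        simp only [List.length_singleton] at hi hj
        omega
    · simp only [List.mem_singleton]
      exact fun h => hsvnx p hp h.symm
    · simp only [List.mem_singleton]
      exact fun h => hsvny p hp h.symm
    · intro p' hp' v hv hadj
      rw [Finset.mem_singleton] at hp'
      subst hp'
      rw [List.mem_singleton]
      exact huniq p' hp v hv hadj
  · -- μ ≥ 2
    obtain ⟨d', rfl⟩ : ∃ d', d = d' + 1 := ⟨d - 1, by omega⟩
    obtain ⟨μ', rfl⟩ : ∃ μ', μ = μ' + 2 := ⟨μ - 2, by omega⟩
    set B := P.filter (fun p => sv p ∈ wx) with hB_def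
    set A := P.filter (fun p => ¬ sv p ∈ wx) with hA_def
    have hBA : B.card + A.card = P.card :=
      Finset.card_filter_add_card_filter_not _
    -- B has at most 2 elements
    have hwxpath := hWpath wx hwxW
    have hixlt : wx.idxOf x < wx.length := List.idxOf_lt_length_iff.mpr hxwx
    have hixget : wx[wx.idxOf x] = x := List.getElem_idxOf hixlt
    have hBcard : B.card ≤ 2 := by
      have h2 : B.card ≤ ({wx.idxOf x + 1, wx.idxOf x - 1} : Finset ℕ).card := by
        apply Finset.card_le_card_of_injOn (fun p => wx.idxOf (sv p))
        · intro p hp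
          have hpP : p ∈ P := Finset.filter_subset _ _ hp
          have hmem : sv p ∈ wx := (Finset.mem_filter.mp hp).2
          have hjlt : wx.idxOf (sv p) < wx.length := List.idxOf_lt_length_iff.mpr hmem
          have hjget : wx[wx.idxOf (sv p)] = sv p := List.getElem_idxOf hjlt
          have h01 := hwxpath.2.2 ⟨wx.idxOf x, hixlt⟩ ⟨wx.idxOf (sv p), hjlt⟩
          simp only [List.get_eq_getElem] at h01
          rw [hixget, hjget] at h01
          have := h01.mp (hadjsv p hpP)
          simp only [Finset.mem_coe, Finset.mem_insert, Finset.mem_singleton]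
          omega
        · intro p hp p' hp' he
          simp only at he
          have hm : sv p ∈ wx := (Finset.mem_filter.mp (Finset.mem_coe.mp hp)).2
          have hm' : sv p' ∈ wx := (Finset.mem_filter.mp (Finset.mem_coe.mp hp')).2
          have hlt : wx.idxOf (sv p) < wx.length := List.idxOf_lt_length_iff.mpr hm
          have hlt' : wx.idxOf (sv p') < wx.length := List.idxOf_lt_length_iff.mpr hm'
          have h1 : wx[wx.idxOf (sv p)]'hlt = sv p := List.getElem_idxOf hlt
          have h2 : wx[wx.idxOf (sv p')]'hlt' = sv p' := List.getElem_idxOf hlt'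
          exact hinj p (Finset.filter_subset _ _ (Finset.mem_coe.mp hp)) p'
            (Finset.filter_subset _ _ (Finset.mem_coe.mp hp'))
            (h1.symm.trans ((getElem_idx_congr he hlt).trans h2))
      exact h2.trans ((Finset.card_insert_le _ _).trans (by simp))
    set S := ((W.erase wx).filter (fun qq => ∃ u ∈ qq, G.Adj x u)) with hS_def
    have hScard : S.card < d' + 1 := hloose wx hwxW x hxwx
    have hmaps : ∀ p ∈ A, f p ∈ S := by
      intro p hpA
      have hpP : p ∈ P := Finset.filter_subset _ _ hpA
      obtain ⟨hfW, hfmem⟩ := hf p hpP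
      have hnwx : sv p ∉ wx := (Finset.mem_filter.mp hpA).2
      refine Finset.mem_filter.mpr ⟨Finset.mem_erase.mpr ⟨?_, hfW⟩, ⟨sv p, hfmem, hadjsv p hpP⟩⟩
      intro h
      exact hnwx (h ▸ hfmem)
    have hmain : S.card * (2 * (μ' + 2) - 1) < A.card := by
      have h1 : S.card ≤ d' := by omega
      have h2 : 2 * (d' + 1) * (μ' + 2) ≤ A.card + 2 := by
        rw [← hcard, ← hBA]; omega
      have h3 : 2 * (μ' + 2) - 1 = 2 * μ' + 3 := by omega
      rw [h3]
      calc S.card * (2 * μ' + 3) ≤ d' * (2 * μ' + 3) := Nat.mul_le_mul_right _ h1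
        _ < A.card := by nlinarith
    obtain ⟨r, hrS, hfib⟩ :=
      Finset.exists_lt_card_fiber_of_mul_lt_card_of_maps_to hmaps hmain
    set T := A.filter (fun p => f p = r) with hT_def
    have hT2μ : 2 * (μ' + 2) ≤ T.card := by omega
    have hTP : T ⊆ P := (Finset.filter_subset _ _).trans (Finset.filter_subset _ _)
    have hrW : r ∈ W := Finset.mem_of_mem_erase (Finset.mem_filter.mp hrS).1
    have hrne : r ≠ wx := Finset.ne_of_mem_erase (Finset.mem_filter.mp hrS).1
    have hxr : x ∉ r := hWdisj wx hwxW r hrW (fun h => hrne h.symm) x hxwx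
    have hrpath := hWpath r hrW
    have hrnd : r.Nodup := hrpath.2.1
    have hsvr : ∀ p ∈ T, sv p ∈ r := by
      intro p hpT
      have h := Finset.mem_filter.mp hpT
      have h2 := (hf p (hTP hpT)).2
      rwa [h.2] at h2
    set idxf : List V → ℕ := fun p => r.idxOf (sv p) with hidxf_def
    have hidxlt : ∀ p ∈ T, idxf p < r.length :=
      fun p hp => List.idxOf_lt_length_iff.mpr (hsvr p hp)
    have hidxget : ∀ p ∈ T, ∀ h : idxf p < r.length, r[idxf p] = sv p :=
      fun p hp h => List.getElem_idxOf h
    set iy := r.idxOf y with hiy_def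
    have hsplit : μ' + 2 ≤ (T.filter (fun p => idxf p < iy)).card ∨
        μ' + 2 ≤ (T.filter (fun p => ¬ idxf p < iy)).card := by
      have := Finset.card_filter_add_card_filter_not
        (s := T) (p := fun p => idxf p < iy)
      omega
    obtain ⟨side, hsideT, hsidecard, hside⟩ :
        ∃ side : Finset (List V), side ⊆ T ∧ μ' + 2 ≤ side.card ∧
          ((∀ p ∈ side, idxf p < iy) ∨ (∀ p ∈ side, ¬ idxf p < iy)) := by
      rcases hsplit with h | h
      · exact ⟨_, Finset.filter_subset _ _, h, Or.inl (fun p hp => (Finset.mem_filter.mp hp).2)⟩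
      · exact ⟨_, Finset.filter_subset _ _, h, Or.inr (fun p hp => (Finset.mem_filter.mp hp).2)⟩
    obtain ⟨P0, hP0side, hP0card⟩ := Finset.exists_subset_card_eq hsidecard
    have hP0T : P0 ⊆ T := hP0side.trans hsideT
    have hP0P : P0 ⊆ P := hP0T.trans hTP
    have hP0ne : P0.Nonempty := by rw [← Finset.card_pos, hP0card]; omega
    set I := P0.image idxf with hI_def
    have hIne : I.Nonempty := hP0ne.image _
    set a := I.min' hIne with ha_def
    set b := I.max' hIne with hb_def
    have hab : a ≤ b := Finset.min'_le I b (Finset.max'_mem I hIne)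
    obtain ⟨pb, hpbP0, hpb⟩ := Finset.mem_image.mp (Finset.max'_mem I hIne)
    obtain ⟨pa, hpaP0, hpa⟩ := Finset.mem_image.mp (Finset.min'_mem I hIne)
    rw [← hb_def] at hpb
    rw [← ha_def] at hpa
    have hblt : b < r.length := by rw [← hpb]; exact hidxlt pb (hP0T hpbP0)
    have hk : a + (b - a + 1) ≤ r.length := by omega
    refine ⟨P0, hP0P, hP0card, (r.drop a).take (b - a + 1),
      slice_isPathList hrpath (by omega) hk, ?_, ?_, ?_⟩
    · exact fun h => hxr (List.Sublist.mem h (slice_sublist r a _))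
    · intro hyW0
      have hyr : y ∈ r := List.Sublist.mem hyW0 (slice_sublist r a _)
      have hiylt : iy < r.length := List.idxOf_lt_length_iff.mpr hyr
      have hiyget : r[iy] = y := List.getElem_idxOf hiylt
      obtain ⟨i, hi, hgi⟩ := List.mem_iff_getElem.mp hyW0
      have hik : i < b - a + 1 := by rwa [slice_length hk] at hi
      have hgr : r[a + i]'(by omega) = y := (slice_getElem hk hik).symm.trans hgi
      have heq : a + i = iy := hrnd.getElem_inj_iff.mp (hgr.trans hiyget.symm)
      rcases hside with hL | hR
      · have hbiy : idxf pb < iy := hL pb (hP0side hpbP0)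
        omega
      · have hay : ¬ idxf pa < iy := hR pa (hP0side hpaP0)
        have hne : idxf pa ≠ iy := by
          intro h
          have h1 : r[idxf pa]'(h ▸ hiylt) = sv pa := hidxget pa (hP0T hpaP0) _
          exact hsvny pa (hP0P hpaP0)
            (h1.symm.trans ((getElem_idx_congr h _).trans hiyget))
        omega
    · intro p hpP0 v hv hadj
      have hveq : v = sv p := huniq p (hP0P hpP0) v hv hadj
      have hplt := hidxlt p (hP0T hpP0)
      have hget := hidxget p (hP0T hpP0) hplt
      have haj : a ≤ idxf p := Finset.min'_le I _ (Finset.mem_image_of_mem idxf hpP0)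
      have hjb : idxf p ≤ b := Finset.le_max' I _ (Finset.mem_image_of_mem idxf hpP0)
      have hm := mem_slice hk haj (by omega : idxf p < a + (b - a + 1))
      rwa [hget, ← hveq] at hm
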